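/- Let A be a rooted ordered tree, n a numbering, and Δ^n, Δ^{c·n} the Saito dicriticities for numberings n and c·n. Suppose s is a vertex with parents satisfying δ_s^n + δ_s^{c·n} = 1 and Δ_s^n + Δ_s^{c·n} = 1, where ν_s^{c·n} = ν_s^n + 1. Then the sum of square indices satisfies □_s^n + □_s^{c·n} = -1/2. -/

import Mathlib

/-- `pairSel a b k` equals `a` if `k` is even and `b` if `k` is odd. -/
def pairSel (a b : ℚ) (k : ℤ) : ℚ := if Even k then a else b

/-- Mixed-branch cancellation: if at a vertex `s` the two Saito dicriticities
(for numberings `n` and `c·n`) are complementary, the white-parent counts are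
complementary, and the valuations differ by one, then the two square indices
sum to `-1/2`. -/
theorem mixed_branch_square_index_sum
    (δn δcn Δn Δcn νn νcn : ℤ)
    (hΔ01 : Δn = 0 ∨ Δn = 1) (hΔ : Δn + Δcn = 1)
    (hδ01 : δn = 0 ∨ δn = 1) (hδ : δn + δcn = 1)
    (hν : νcn = νn + 1) :
    ((δn : ℚ) / 2 - pairSel (Δn : ℚ) (1/2) (νn - δn)) +
      ((δcn : ℚ) / 2 - pairSel (Δcn : ℚ) (1/2) (νcn - δcn)) = -(1/2) := by
  have hδcn : δcn = 1 - δn := by omega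
  have hΔcn : Δcn = 1 - Δn := by omega
  subst hδcn hΔcn hν
  rcases hδ01 with h | h <;> rcases hΔ01 with h2 | h2 <;> subst h h2 <;>
    rcases Int.even_or_odd νn with h3 | h3 <;>
    simp_all [pairSel, parity_simps, ← Int.not_odd_iff_even] <;> ring
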